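/- Let A and B be C*-algebras with A unital, and let φ : cl(GL(M₂(A))) → B be an arbitrary function defined on the norm closure of the set of invertible elements of M₂(A). Then φ extends to a *-homomorphism M₂(A) → B if and only if φ is a *-semigroup homomorphism (φ(xy) = φ(x)φ(y) and φ(x*) = φ(x)* whenever x, y and xy lie in cl(GL(M₂(A)))) satisfying φ(i·1) = i·φ(e₁₁) + i·φ(e₂₂). -/

import Mathlib

attribute [local instance] Matrix.linftyOpNormedRing




namespace Stmt6Aux

open Matrix

variable {A : Type*} [CStarAlgebra A]

local notation "M2" => Matrix (Fin 2) (Fin 2) A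

theorem mul_mem_cl {x y : M2} (hx : x ∈ closure {z : M2 | IsUnit z})
    (hy : y ∈ closure {z : M2 | IsUnit z}) : x * y ∈ closure {z : M2 | IsUnit z} :=
  ((IsUnit.submonoid M2).topologicalClosure).mul_mem hx hy

theorem unit_of_sq_zero {c : ℂ} (hc : c ≠ 0) {N : M2} (hN : N * N = 0) :
    IsUnit (N + c • 1) := by
  have hcc : c * (c⁻¹ * c⁻¹) = c⁻¹ := by field_simp
  have hcc' : c⁻¹ * c⁻¹ * c = c⁻¹ := by field_simp
  refine isUnit_iff_exists.mpr ⟨c⁻¹ • 1 - (c⁻¹ * c⁻¹) • N, ?_, ?_⟩ <;>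
  · simp only [mul_sub, sub_mul, add_mul, mul_add, smul_mul_assoc, mul_smul_comm, smul_smul,
      hN, smul_zero, one_mul, mul_one, smul_add, smul_sub]
    match_scalars <;> field_simp <;> ring

theorem norm_one_le : ‖(1 : A)‖ ≤ 1 := by
  have h := CStarRing.norm_star_mul_self (x := (1 : A))
  simp only [star_one, one_mul] at h
  nlinarith [norm_nonneg (1 : A)]

theorem sq_zero_mem_cl {N : M2} (hN : N * N = 0) : N ∈ closure {z : M2 | IsUnit z} := by
  refine Metric.mem_closure_iff.mpr ?_
  intro ε hε
  have hpos : (0:ℝ) < ε/2 := by positivity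
  have hne : ((ε/2 : ℝ) : ℂ) ≠ 0 := by
    simp only [ne_eq, Complex.ofReal_eq_zero]
    exact hpos.ne'
  refine ⟨N + ((ε/2 : ℝ) : ℂ) • 1, unit_of_sq_zero hne hN, ?_⟩
  have hd : dist N (N + ((ε/2 : ℝ) : ℂ) • 1) = ‖((ε/2 : ℝ) : ℂ) • (1 : M2)‖ := by
    rw [dist_eq_norm]
    simp
  rw [hd]
  have h1 : ((ε/2 : ℝ) : ℂ) • (1 : M2) = Matrix.diagonal (fun _ => ((ε/2 : ℝ) : ℂ) • (1 : A)) := by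
    ext i j
    by_cases h : i = j <;> simp [h, Matrix.one_apply, Matrix.diagonal_apply]
  rw [h1, Matrix.linfty_opNorm_diagonal]
  have h2 : ‖fun _ : Fin 2 => ((ε/2 : ℝ) : ℂ) • (1 : A)‖ = ‖((ε/2 : ℝ) : ℂ) • (1 : A)‖ :=
    pi_norm_const _
  rw [h2, norm_smul]
  have h3 : ‖((ε/2 : ℝ) : ℂ)‖ = ε/2 := by
    rw [Complex.norm_real, Real.norm_of_nonneg (by linarith)]
  rw [h3]
  nlinarith [norm_one_le (A := A), norm_nonneg (1 : A)]

end Stmt6Aux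

namespace Stmt6Aux2
open Stmt6Aux Matrix
variable {A : Type*} [CStarAlgebra A]
local notation "M2" => Matrix (Fin 2) (Fin 2) A
local notation "E" => Matrix.single (m := Fin 2) (n := Fin 2) (α := A)

theorem E01_sq (a b : A) : E 0 1 a * E 0 1 b = 0 :=
  single_mul_single_of_ne a _ _ _ (by decide) b

theorem E10_sq (a b : A) : E 1 0 a * E 1 0 b = 0 :=
  single_mul_single_of_ne a _ _ _ (by decide) b

theorem mem01 (a : A) : E 0 1 a ∈ closure {z : M2 | IsUnit z} :=
  sq_zero_mem_cl (E01_sq a a)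

theorem mem10 (a : A) : E 1 0 a ∈ closure {z : M2 | IsUnit z} :=
  sq_zero_mem_cl (E10_sq a a)

theorem memE (j k : Fin 2) (a : A) : E j k a ∈ closure {z : M2 | IsUnit z} := by
  fin_cases j <;> fin_cases k
  · have := mul_mem_cl (mem01 a) (mem10 (1:A))
    rwa [single_mul_single_same, mul_one] at this
  · exact mem01 a
  · exact mem10 a
  · have := mul_mem_cl (mem10 a) (mem01 (1:A))
    rwa [single_mul_single_same, mul_one] at this

/-- upper unitriangular -/
def uM (a : A) : Matrix (Fin 2) (Fin 2) A := 1 + Matrix.single 0 1 a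
/-- lower unitriangular -/
def lM (a : A) : Matrix (Fin 2) (Fin 2) A := 1 + Matrix.single 1 0 a

theorem isUnit_u (a : A) : IsUnit (uM a) := by
  have := unit_of_sq_zero (c := (1:ℂ)) one_ne_zero (N := E 0 1 a) (E01_sq a a)
  rwa [one_smul, add_comm] at this

theorem isUnit_l (a : A) : IsUnit (lM a) := by
  have := unit_of_sq_zero (c := (1:ℂ)) one_ne_zero (N := E 1 0 a) (E10_sq a a)
  rwa [one_smul, add_comm] at this

theorem corner_eq (j k : Fin 2) (x : M2) :
    E j j (1:A) * x * E k k 1 = E j k (x j k) := by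
  fin_cases j <;> fin_cases k <;>
  · ext a b
    fin_cases a <;> fin_cases b <;>
      simp [Matrix.mul_apply, Fin.sum_univ_two, Matrix.single]

theorem u_mul_u (a b : A) : uM a * uM b = uM (a + b) := by
  unfold uM
  simp only [add_mul, mul_add, one_mul, mul_one, E01_sq, single_add, add_zero]
  abel

theorem l_mul_l (a b : A) : lM a * lM b = lM (a + b) := by
  unfold lM
  simp only [add_mul, mul_add, one_mul, mul_one, E10_sq, single_add, add_zero]
  abel

theorem u_apply_00 (a : A) : uM a 0 0 = 1 := by
  simp [uM, Matrix.one_apply, Matrix.single]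
theorem u_apply_11 (a : A) : uM a 1 1 = 1 := by
  simp [uM, Matrix.one_apply, Matrix.single]
theorem u_apply_01 (a : A) : uM a 0 1 = a := by
  simp [uM, Matrix.one_apply, Matrix.single]
theorem l_apply_00 (a : A) : lM a 0 0 = 1 := by
  simp [lM, Matrix.one_apply, Matrix.single]
theorem l_apply_11 (a : A) : lM a 1 1 = 1 := by
  simp [lM, Matrix.one_apply, Matrix.single]
theorem l_apply_10 (a : A) : lM a 1 0 = a := by
  simp [lM, Matrix.one_apply, Matrix.single]

theorem star_E (j k : Fin 2) (a : A) : star (E j k a) = E k j (star a) := by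
  ext i i'
  simp only [Matrix.star_apply, Matrix.single, Matrix.of_apply,
    apply_ite (star : A → A), star_zero]
  split_ifs <;> simp_all

theorem one_eq : (1 : M2) = E 0 0 1 + E 1 1 1 := by
  ext a b
  fin_cases a <;> fin_cases b <;> simp [Matrix.one_apply, Matrix.single]

theorem smulI_mul_E00 : (Complex.I • (1 : M2)) * E 0 0 1 = E 0 0 (Complex.I • 1) := by
  rw [smul_mul_assoc, one_mul, smul_single]

theorem smulI_mul_E11 : (Complex.I • (1 : M2)) * E 1 1 1 = E 1 1 (Complex.I • 1) := by
  rw [smul_mul_assoc, one_mul, smul_single]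

theorem isUnit_smul_one {c : ℂ} (hc : c ≠ 0) : IsUnit (c • (1 : M2)) :=
  isUnit_iff_exists.mpr ⟨c⁻¹ • 1,
    by simp [smul_smul, mul_inv_cancel₀ hc, inv_mul_cancel₀ hc],
    by simp [smul_smul, mul_inv_cancel₀ hc, inv_mul_cancel₀ hc]⟩

theorem E_smul (j k : Fin 2) (c : ℂ) (a : A) : E j k (c • a) = c • E j k a :=
  (smul_single c j k a).symm

theorem E_mul_scalar (j k : Fin 2) (c : ℂ) (a : A) :
    E j j (c • (1:A)) * E j k a = E j k (c • a) := by
  rw [single_mul_single_same, smul_mul_assoc, one_mul]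

end Stmt6Aux2

namespace Stmt6Real

variable {B : Type*} [NonUnitalCStarAlgebra B]

theorem real_hom_smul (f : ℝ → B)
    (hadd : ∀ r s, f (r + s) = f r + f s)
    (hmul : ∀ r s, f (r * s) = f r * f s)
    (hstar : ∀ r, star (f r) = f r) (r : ℝ) :
    f r = ((r : ℝ) : ℂ) • f 1 := by
  classical
  letI : PartialOrder (Unitization ℂ B) := CStarAlgebra.spectralOrder _
  letI : StarOrderedRing (Unitization ℂ B) := CStarAlgebra.spectralOrderedRing _
  set g : ℝ →+ B := AddMonoidHom.mk' f hadd with hg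
  have hf0 : f 0 = 0 := by
    have h : f 0 + f 0 = f 0 := by rw [← hadd, add_zero]
    exact add_eq_right.mp h
  have hint : ∀ (n : ℤ) (x : ℝ), f ((n : ℝ) * x) = (n : ℂ) • f x := by
    intro n x
    have h1 : f ((n : ℤ) • x) = (n : ℤ) • f x := map_zsmul g n x
    simp only [zsmul_eq_mul] at h1
    rw [h1, ← Int.cast_smul_eq_zsmul ℂ]
  have hrat : ∀ q : ℚ, f (q : ℝ) = ((q : ℝ) : ℂ) • f 1 := by
    intro q
    have hdenR : ((q.den : ℝ)) ≠ 0 := Nat.cast_ne_zero.mpr q.den_nz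
    have hden : ((q.den : ℂ)) ≠ 0 := Nat.cast_ne_zero.mpr q.den_nz
    have hq : (q : ℝ) = (q.num : ℝ) / (q.den : ℝ) := by
      rw [Rat.cast_def]
    have hd : ((q.den : ℝ)) * (q : ℝ) = (q.num : ℝ) := by
      rw [hq]; field_simp
    have h1 : f ((q.den : ℝ) * (q : ℝ)) = ((q.den : ℕ) : ℂ) • f (q : ℝ) := by
      have h := hint (q.den : ℤ) (q : ℝ)
      push_cast at h ⊢
      exact h
    have h2 : f ((q.num : ℝ)) = (q.num : ℂ) • f 1 := by
      have h := hint q.num 1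
      rw [mul_one] at h
      exact h
    have hEq : ((q.den : ℕ) : ℂ) • f (q : ℝ) = (q.num : ℂ) • f 1 := by
      rw [← h1, hd, h2]
    calc f (q : ℝ) = ((q.den : ℂ))⁻¹ • (((q.den : ℕ) : ℂ) • f (q : ℝ)) := by
          rw [smul_smul, inv_mul_cancel₀ hden, one_smul]
      _ = ((q.den : ℂ))⁻¹ • ((q.num : ℂ) • f 1) := by rw [hEq]
      _ = ((q : ℝ) : ℂ) • f 1 := by
          rw [smul_smul]
          congr 1
          rw [hq]
          push_cast
          field_simp
  have hnonneg : ∀ t : ℝ, 0 ≤ t → (0 : Unitization ℂ B) ≤ (f t : Unitization ℂ B) := by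
    intro t ht
    have h1 : f t = star (f (Real.sqrt t)) * f (Real.sqrt t) := by
      rw [hstar, ← hmul, Real.mul_self_sqrt ht]
    rw [h1, Unitization.inr_mul, Unitization.inr_star]
    exact star_mul_self_nonneg _
  have hmono : ∀ s t : ℝ, s ≤ t →
      ((f s : Unitization ℂ B) ≤ (f t : Unitization ℂ B)) := by
    intro s t hst
    have h1 : f t = f s + f (t - s) := by rw [← hadd]; ring_nf
    rw [h1, Unitization.inr_add]
    have := hnonneg (t - s) (by linarith)
    calc (f s : Unitization ℂ B) = (f s : Unitization ℂ B) + 0 := by rw [add_zero]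
      _ ≤ (f s : Unitization ℂ B) + (f (t-s) : Unitization ℂ B) := by
          exact add_le_add_right this _
  -- the squeeze
  have hkey : ∀ δ : ℝ, 0 < δ → ‖f r - ((r:ℝ):ℂ) • f 1‖ ≤ δ * (3 * ‖f 1‖) := by
    intro δ hδ
    obtain ⟨q₁, hq₁, hq₁'⟩ := exists_rat_btwn (show r - δ < r by linarith)
    obtain ⟨q₂, hq₂, hq₂'⟩ := exists_rat_btwn (show r < r + δ by linarith)
    set P : Unitization ℂ B := ((f 1 : B) : Unitization ℂ B) with hP
    have hFq : ∀ q : ℚ, ((f (q:ℝ) : B) : Unitization ℂ B) = ((q:ℝ):ℂ) • P := by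
      intro q
      rw [hrat q, Unitization.inr_smul]
    have h1 : ((q₁:ℝ):ℂ) • P ≤ ((f r : B) : Unitization ℂ B) := by
      rw [← hFq]; exact hmono _ _ hq₁'.le
    have h2 : ((f r : B) : Unitization ℂ B) ≤ ((q₂:ℝ):ℂ) • P := by
      rw [← hFq]; exact hmono _ _ hq₂.le
    have hband : ‖((f r : B) : Unitization ℂ B) - ((q₁:ℝ):ℂ) • P‖
        ≤ ‖(((q₂:ℝ) - (q₁:ℝ) : ℝ):ℂ) • P‖ := by
      refine CStarAlgebra.norm_le_norm_of_nonneg_of_le (sub_nonneg.mpr h1) ?_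
      have : (((q₂:ℝ) - (q₁:ℝ) : ℝ):ℂ) • P = ((q₂:ℝ):ℂ) • P - ((q₁:ℝ):ℂ) • P := by
        push_cast
        rw [sub_smul]
      rw [this]
      exact sub_le_sub_right h2 _
    have hnorm1 : ‖(((q₂:ℝ) - (q₁:ℝ) : ℝ):ℂ) • P‖ = |(q₂:ℝ) - (q₁:ℝ)| * ‖P‖ := by
      rw [norm_smul, Complex.norm_real, Real.norm_eq_abs]
    have hPnorm : ‖P‖ = ‖f 1‖ := Unitization.norm_inr _
    have hup : ‖((f r : B) : Unitization ℂ B) - ((r:ℝ):ℂ) • P‖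
        ≤ |(q₂:ℝ) - (q₁:ℝ)| * ‖f 1‖ + |(q₁:ℝ) - r| * ‖f 1‖ := by
      have : ((f r : B) : Unitization ℂ B) - ((r:ℝ):ℂ) • P
          = (((f r : B) : Unitization ℂ B) - ((q₁:ℝ):ℂ) • P) + ((((q₁:ℝ) - r : ℝ):ℂ)) • P := by
        push_cast
        rw [sub_smul]
        abel
      rw [this]
      refine (norm_add_le _ _).trans ?_
      rw [norm_smul, Complex.norm_real, Real.norm_eq_abs, hPnorm]
      exact add_le_add (hband.trans_eq (by rw [hnorm1, hPnorm])) le_rfl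
    have hcoe : ‖f r - ((r:ℝ):ℂ) • f 1‖ = ‖((f r : B) : Unitization ℂ B) - ((r:ℝ):ℂ) • P‖ := by
      rw [hP, ← Unitization.inr_smul, ← Unitization.inr_sub, Unitization.norm_inr]
    rw [hcoe]
    refine hup.trans ?_
    have e1 : |(q₂:ℝ) - (q₁:ℝ)| ≤ 2 * δ := by
      rw [abs_of_nonneg (by linarith)]
      linarith
    have e2 : |(q₁:ℝ) - r| ≤ δ := by
      rw [abs_of_nonpos (by linarith)]
      linarith
    nlinarith [norm_nonneg (f 1)]
  -- conclude
  have hz : ‖f r - ((r:ℝ):ℂ) • f 1‖ = 0 := by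
    by_contra h
    set x := f r - ((r:ℝ):ℂ) • f 1 with hx
    have hpos : 0 < ‖x‖ := lt_of_le_of_ne (norm_nonneg _) (Ne.symm h)
    have hC : (0:ℝ) ≤ ‖f 1‖ := norm_nonneg _
    have := hkey (‖x‖ / (6 * ‖f 1‖ + 2)) (by positivity)
    have hbound : ‖x‖ / (6 * ‖f 1‖ + 2) * (3 * ‖f 1‖) ≤ ‖x‖ / 2 := by
      rw [div_mul_eq_mul_div, div_le_div_iff₀ (by positivity) (by norm_num)]
      nlinarith
    linarith
  exact sub_eq_zero.mp (norm_eq_zero.mp hz)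

end Stmt6Real

namespace Stmt6Main
open Stmt6Aux Stmt6Aux2 Stmt6Real Matrix

variable {A B : Type*} [CStarAlgebra A] [NonUnitalCStarAlgebra B]

local notation "M2" => Matrix (Fin 2) (Fin 2) A
local notation "E" => Matrix.single (m := Fin 2) (n := Fin 2) (α := A)

theorem backward (φ : Matrix (Fin 2) (Fin 2) A → B)
    (hm : ∀ x y : M2, x ∈ closure {z : M2 | IsUnit z} → y ∈ closure {z : M2 | IsUnit z} →
      x * y ∈ closure {z : M2 | IsUnit z} → φ (x * y) = φ x * φ y)
    (hst : ∀ x : M2, x ∈ closure {z : M2 | IsUnit z} → star x ∈ closure {z : M2 | IsUnit z} →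
      φ (star x) = star (φ x))
    (hI : φ (Complex.I • (1 : M2)) = Complex.I • φ (E 0 0 1) + Complex.I • φ (E 1 1 1)) :
    ∃ ψ : M2 → B,
      (∀ x y, ψ (x + y) = ψ x + ψ y) ∧ (∀ (c : ℂ) (x), ψ (c • x) = c • ψ x) ∧
      (∀ x y, ψ (x * y) = ψ x * ψ y) ∧ (∀ x, ψ (star x) = star (ψ x)) ∧
      (∀ x ∈ closure {z : M2 | IsUnit z}, ψ x = φ x) := by
  classical
  set S : Set M2 := closure {z : M2 | IsUnit z} with hS
  have hm' : ∀ {x y : M2}, x ∈ S → y ∈ S → φ (x * y) = φ x * φ y := fun hx hy =>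
    hm _ _ hx hy (mul_mem_cl hx hy)
  have mem0 : (0 : M2) ∈ S := sq_zero_mem_cl (by rw [mul_zero])
  have mem1 : (1 : M2) ∈ S := subset_closure isUnit_one
  have memI : Complex.I • (1 : M2) ∈ S := subset_closure (isUnit_smul_one Complex.I_ne_zero)
  have memu : ∀ a : A, uM a ∈ S := fun a => subset_closure (isUnit_u a)
  have meml : ∀ a : A, lM a ∈ S := fun a => subset_closure (isUnit_l a)
  set P : Fin 2 → B := fun j => φ (E j j 1) with hP
  set z : B := φ 0 with hzdef
  -- absorption of zero
  have hz_l : ∀ s ∈ S, z * φ s = z := by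
    intro s hs
    have h := hm' mem0 hs
    rw [zero_mul] at h
    exact h.symm
  have hz_r : ∀ s ∈ S, φ s * z = z := by
    intro s hs
    have h := hm' hs mem0
    rw [mul_zero] at h
    exact h.symm
  -- z = 0
  have hz0 : z = 0 := by
    have h1 : z * φ (Complex.I • (1:M2)) = z := hz_l _ memI
    rw [hI, mul_add, mul_smul_comm, mul_smul_comm] at h1
    rw [hz_l _ (memE 0 0 1), hz_l _ (memE 1 1 1)] at h1
    -- h1 : I • z + I • z = z
    have h2 : ((1 : ℂ) - 2 * Complex.I) • z = 0 := by
      rw [sub_smul, one_smul, sub_eq_zero, two_mul, add_smul]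
      exact h1.symm
    have hne : (1 : ℂ) - 2 * Complex.I ≠ 0 := by
      intro h
      have := congrArg Complex.im h
      simp at this
    have := congrArg (fun w => ((1 : ℂ) - 2 * Complex.I)⁻¹ • w) h2
    simpa [smul_smul, inv_mul_cancel₀ hne] using this
  have hφ0 : φ (0 : M2) = 0 := hz0
  -- idempotents and orthogonality
  have hp_idem : ∀ j, P j * P j = P j := by
    intro j
    have h := hm' (memE j j 1) (memE j j 1)
    rw [single_mul_single_same, one_mul] at h
    exact h.symm
  have hp_orth : ∀ j k, j ≠ k → P j * P k = 0 := by
    intro j k hjk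
    have h := hm' (memE j j 1) (memE k k 1)
    rw [single_mul_single_of_ne _ _ _ _ hjk, hφ0] at h
    exact h.symm
  -- φ 1 = P 0 + P 1
  have hmm : φ ((Complex.I • (1:M2)) * (Complex.I • 1)) = φ (Complex.I • (1:M2)) * φ (Complex.I • 1) :=
    hm' memI memI
  have hsmul_mul : ∀ c d : ℂ, (c • (1:M2)) * (d • 1) = (c * d) • 1 := by
    intro c d
    rw [smul_mul_assoc, mul_smul_comm, one_mul, smul_smul]
  have hq : φ (1 : M2) = P 0 + P 1 := by
    have hneg : φ ((-1 : ℂ) • (1:M2)) = -(P 0 + P 1) := by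
      have h1 : ((Complex.I • (1:M2)) * (Complex.I • 1)) = (-1 : ℂ) • 1 := by
        rw [hsmul_mul, Complex.I_mul_I]
      rw [← h1, hmm, hI]
      rw [add_mul, smul_mul_assoc, smul_mul_assoc, mul_add, mul_add, mul_smul_comm, mul_smul_comm,
        mul_smul_comm, mul_smul_comm]
      rw [hp_idem 0, hp_orth 0 1 (by decide), hp_orth 1 0 (by decide), hp_idem 1]
      simp only [smul_zero, add_zero, zero_add, smul_smul, Complex.I_mul_I]
      rw [neg_smul, neg_smul, one_smul, one_smul, neg_add]
    have memneg : ((-1 : ℂ) • (1:M2)) ∈ S := subset_closure (isUnit_smul_one (by norm_num))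
    have h2 : ((-1 : ℂ) • (1:M2)) * ((-1 : ℂ) • 1) = 1 := by
      rw [hsmul_mul]; norm_num
    have h3 := hm' memneg memneg
    rw [h2, hneg] at h3
    rw [h3, neg_mul_neg, mul_add, add_mul, add_mul, hp_idem 0, hp_idem 1,
      hp_orth 0 1 (by decide), hp_orth 1 0 (by decide)]
    abel
  -- unit absorption
  have hq_l : ∀ s ∈ S, φ 1 * φ s = φ s := by
    intro s hs
    have h := hm' mem1 hs
    rw [one_mul] at h
    exact h.symm
  have hq_r : ∀ s ∈ S, φ s * φ 1 = φ s := by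
    intro s hs
    have h := hm' hs mem1
    rw [mul_one] at h
    exact h.symm
  -- corner extraction
  have hcorner : ∀ (j k : Fin 2), ∀ s ∈ S, φ (E j k (s j k)) = P j * (φ s * P k) := by
    intro j k s hs
    have h1 : φ (E j j 1 * s) = P j * φ s := hm' (memE j j 1) hs
    have h2 : φ ((E j j 1 * s) * E k k 1) = φ (E j j 1 * s) * P k :=
      hm' (mul_mem_cl (memE j j 1) hs) (memE k k 1)
    calc φ (E j k (s j k)) = φ (E j j 1 * s * E k k 1) := by rw [corner_eq]
      _ = φ (E j j 1 * s) * P k := h2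
      _ = (P j * φ s) * P k := by rw [h1]
      _ = P j * (φ s * P k) := by rw [mul_assoc]
  -- Peirce decomposition of φ on S
  have hsplit : ∀ s ∈ S, φ s = P 0 * (φ s * P 0) + P 0 * (φ s * P 1)
      + P 1 * (φ s * P 0) + P 1 * (φ s * P 1) := by
    intro s hs
    have h1 : φ s = (P 0 + P 1) * (φ s * (P 0 + P 1)) := by
      rw [← hq, ← mul_assoc, hq_l _ hs, hq_r _ hs]
    exact h1.trans (by rw [mul_add, add_mul, mul_add, mul_add]; abel)
  -- product of corners
  have hP0P0 : ∀ u : B, P 0 * (P 0 * u) = P 0 * u := fun u => by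
    rw [← mul_assoc, hp_idem 0]
  have hP1P1 : ∀ u : B, P 1 * (P 1 * u) = P 1 * u := fun u => by
    rw [← mul_assoc, hp_idem 1]
  have hmulcorner : ∀ s ∈ S, ∀ t ∈ S, ∀ j k : Fin 2,
      P j * (φ (s * t) * P k) =
        (P j * (φ s * P 0)) * (P 0 * (φ t * P k)) +
        (P j * (φ s * P 1)) * (P 1 * (φ t * P k)) := by
    intro s hs t ht j k
    have h1 : φ (s * t) = φ s * φ t := hm' hs ht
    have h2 : φ s * φ t = φ s * ((P 0 + P 1) * φ t) := by
      rw [← hq, ← mul_assoc, hq_r _ hs]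
    calc P j * (φ (s * t) * P k) = P j * ((φ s * ((P 0 + P 1) * φ t)) * P k) := by
          rw [h1, ← h2]
      _ = (P j * (φ s * P 0)) * (P 0 * (φ t * P k)) +
          (P j * (φ s * P 1)) * (P 1 * (φ t * P k)) := by
          simp only [mul_add, add_mul, mul_assoc]
          rw [hP0P0, hP1P1]
  -- corner maps
  have hΦmul : ∀ (j k l : Fin 2) (a b : A), φ (E j k a) * φ (E k l b) = φ (E j l (a * b)) := by
    intro j k l a b
    have h := hm' (memE j k a) (memE k l b)
    rw [single_mul_single_same] at h
    exact h.symm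
  have hΦmul_ne : ∀ (j k k' l : Fin 2), k ≠ k' → ∀ a b : A,
      φ (E j k a) * φ (E k' l b) = 0 := by
    intro j k k' l hkk a b
    have h := hm' (memE j k a) (memE k' l b)
    rw [single_mul_single_of_ne _ _ _ _ hkk, hφ0] at h
    exact h.symm
  have hPleft : ∀ (j k : Fin 2) (a : A), P j * φ (E j k a) = φ (E j k a) := by
    intro j k a
    have h := hΦmul j j k 1 a
    rw [one_mul] at h
    exact h
  have hPright : ∀ (j k : Fin 2) (a : A), φ (E j k a) * P k = φ (E j k a) := by
    intro j k a
    have h := hΦmul j k k a 1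
    rw [mul_one] at h
    exact h
  -- additivity on corners
  have hadd01 : ∀ a b : A, φ (E 0 1 (a + b)) = φ (E 0 1 a) + φ (E 0 1 b) := by
    intro a b
    have hu : ∀ x : A, φ (E 0 1 x) = P 0 * (φ (uM x) * P 1) := by
      intro x
      have h := hcorner 0 1 (uM x) (memu x)
      rw [u_apply_01] at h
      exact h
    have hu00 : ∀ x : A, P 0 * (φ (uM x) * P 0) = P 0 := by
      intro x
      have h := hcorner 0 0 (uM x) (memu x)
      rw [u_apply_00] at h
      exact h.symm
    have hu11 : ∀ x : A, P 1 * (φ (uM x) * P 1) = P 1 := by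
      intro x
      have h := hcorner 1 1 (uM x) (memu x)
      rw [u_apply_11] at h
      exact h.symm
    have h1 : φ (E 0 1 (a + b)) = P 0 * (φ (uM a * uM b) * P 1) := by
      rw [u_mul_u]; exact hu (a + b)
    rw [h1, hmulcorner _ (memu a) _ (memu b) 0 1, hu00 a, hu11 b, ← hu a, ← hu b]
    rw [hPleft, hPright]
    exact add_comm _ _
  have hadd10 : ∀ a b : A, φ (E 1 0 (a + b)) = φ (E 1 0 a) + φ (E 1 0 b) := by
    intro a b
    have hu : ∀ x : A, φ (E 1 0 x) = P 1 * (φ (lM x) * P 0) := by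
      intro x
      have h := hcorner 1 0 (lM x) (meml x)
      rw [l_apply_10] at h
      exact h
    have hu00 : ∀ x : A, P 0 * (φ (lM x) * P 0) = P 0 := by
      intro x
      have h := hcorner 0 0 (lM x) (meml x)
      rw [l_apply_00] at h
      exact h.symm
    have hu11 : ∀ x : A, P 1 * (φ (lM x) * P 1) = P 1 := by
      intro x
      have h := hcorner 1 1 (lM x) (meml x)
      rw [l_apply_11] at h
      exact h.symm
    have h1 : φ (E 1 0 (a + b)) = P 1 * (φ (lM a * lM b) * P 0) := by
      rw [l_mul_l]; exact hu (a + b)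
    rw [h1, hmulcorner _ (meml a) _ (meml b) 1 0, hu11 a, hu00 b, ← hu a, ← hu b]
    rw [hPleft, hPright]
  have hadd00 : ∀ a b : A, φ (E 0 0 (a + b)) = φ (E 0 0 a) + φ (E 0 0 b) := by
    intro a b
    have h : ∀ x : A, φ (E 0 0 x) = φ (E 0 1 x) * φ (E 1 0 1) := by
      intro x
      rw [hΦmul, mul_one]
    rw [h, h, h, hadd01, add_mul]
  have hadd11 : ∀ a b : A, φ (E 1 1 (a + b)) = φ (E 1 1 a) + φ (E 1 1 b) := by
    intro a b
    have h : ∀ x : A, φ (E 1 1 x) = φ (E 1 0 x) * φ (E 0 1 1) := by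
      intro x
      rw [hΦmul, mul_one]
    rw [h, h, h, hadd10, add_mul]
  have haddΦ : ∀ (j k : Fin 2) (a b : A),
      φ (E j k (a + b)) = φ (E j k a) + φ (E j k b) := by
    intro j k a b
    fin_cases j <;> fin_cases k
    · exact hadd00 a b
    · exact hadd01 a b
    · exact hadd10 a b
    · exact hadd11 a b
  -- star on corners
  have hstarΦ : ∀ (j k : Fin 2) (a : A), star (φ (E j k a)) = φ (E k j (star a)) := by
    intro j k a
    have h := hst (E j k a) (memE j k a) (by rw [star_E]; exact memE k j (star a))
    rw [star_E] at h
    exact h.symm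
  -- real scalars
  have hreal : ∀ (j : Fin 2) (r : ℝ), φ (E j j (((r : ℝ) : ℂ) • 1)) = ((r : ℝ) : ℂ) • P j := by
    intro j r
    set f : ℝ → B := fun r => φ (E j j (((r : ℝ) : ℂ) • 1)) with hf
    have hfadd : ∀ r s : ℝ, f (r + s) = f r + f s := by
      intro r s
      have : (((r + s : ℝ) : ℂ)) • (1:A) = ((r : ℝ) : ℂ) • 1 + ((s : ℝ) : ℂ) • 1 := by
        push_cast
        rw [add_smul]
      simp only [hf]
      rw [this, haddΦ]
    have hfmul : ∀ r s : ℝ, f (r * s) = f r * f s := by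
      intro r s
      have h1 : φ (E j j (((r : ℝ) : ℂ) • 1)) * φ (E j j (((s : ℝ) : ℂ) • 1))
          = φ (E j j ((((r : ℝ) : ℂ) • (1:A)) * (((s : ℝ) : ℂ) • 1))) := hΦmul j j j _ _
      have h2 : (((r : ℝ) : ℂ) • (1:A)) * (((s : ℝ) : ℂ) • 1) = (((r * s : ℝ) : ℂ)) • 1 := by
        rw [smul_mul_assoc, mul_smul_comm, one_mul, smul_smul]
        push_cast
        ring_nf
      simp only [hf]
      rw [← h2, ← h1]
    have hfstar : ∀ r : ℝ, star (f r) = f r := by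
      intro r
      simp only [hf]
      rw [hstarΦ]
      have : star ((((r : ℝ) : ℂ)) • (1:A)) = (((r : ℝ) : ℂ)) • 1 := by
        rw [star_smul, star_one, Complex.star_def, Complex.conj_ofReal]
      rw [this]
    have := real_hom_smul f hfadd hfmul hfstar r
    simp only [hf] at this
    rw [this]
    congr 1
    norm_num
    rfl
  -- I scalar
  have hIsc : ∀ j : Fin 2, φ (E j j (Complex.I • 1))
      = Complex.I • (φ (E 0 0 1) * P j) + Complex.I • (φ (E 1 1 1) * P j) := by
    intro j
    have h1 : E j j (Complex.I • (1:A)) = (Complex.I • (1:M2)) * E j j 1 := by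
      rw [smul_mul_assoc, one_mul, smul_single]
    have h2 := hm' memI (memE j j 1)
    rw [← h1] at h2
    rw [h2, hI, add_mul, smul_mul_assoc, smul_mul_assoc]
  have hIscalar : ∀ j : Fin 2, φ (E j j (Complex.I • 1)) = Complex.I • P j := by
    intro j
    fin_cases j
    · show φ (E 0 0 (Complex.I • 1)) = Complex.I • P 0
      rw [hIsc 0, show φ (E 0 0 1) * P 0 = P 0 from hp_idem 0,
        show φ (E 1 1 1) * P 0 = 0 from hp_orth 1 0 (by decide), smul_zero, add_zero]
    · show φ (E 1 1 (Complex.I • 1)) = Complex.I • P 1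
      rw [hIsc 1, show φ (E 0 0 1) * P 1 = 0 from hp_orth 0 1 (by decide),
        show φ (E 1 1 1) * P 1 = P 1 from hp_idem 1, smul_zero, zero_add]
  -- complex scalars on the diagonal
  have hCscalar : ∀ (j : Fin 2) (c : ℂ), φ (E j j (c • 1)) = c • P j := by
    intro j c
    have hd : c • (1:A) = ((c.re : ℝ) : ℂ) • 1 + ((c.im : ℝ) : ℂ) • (Complex.I • (1:A)) := by
      rw [smul_smul, ← add_smul]
      congr 1
      simp [Complex.re_add_im]
    have h2 : (((c.im : ℝ) : ℂ) • (1:A)) * (Complex.I • 1) = ((c.im : ℝ) : ℂ) • (Complex.I • (1:A)) := by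
      rw [smul_mul_assoc, mul_smul_comm, one_mul]
    have h3 : φ (E j j (((c.im : ℝ) : ℂ) • (Complex.I • (1:A))))
        = (((c.im : ℝ) : ℂ) * Complex.I) • P j := by
      rw [← h2, ← hΦmul j j j, hreal, hIscalar, smul_mul_smul_comm, hp_idem j]
    rw [hd, haddΦ, hreal, h3, ← add_smul]
    congr 1
    simp [Complex.re_add_im]
  -- scalar multiplication on corners
  have hΦsmul : ∀ (j k : Fin 2) (c : ℂ) (a : A),
      φ (E j k (c • a)) = c • φ (E j k a) := by
    intro j k c a
    have h1 : (c • (1:A)) * a = c • a := by rw [smul_mul_assoc, one_mul]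
    rw [← h1, ← hΦmul j j k, hCscalar, smul_mul_assoc, hPleft]
  -- helper zero-product rules
  have hne01 : ∀ (j l : Fin 2) (a b : A), φ (E j 0 a) * φ (E 1 l b) = 0 :=
    fun j l a b => hΦmul_ne j 0 1 l (by decide) a b
  have hne10 : ∀ (j l : Fin 2) (a b : A), φ (E j 1 a) * φ (E 0 l b) = 0 :=
    fun j l a b => hΦmul_ne j 1 0 l (by decide) a b
  -- the extension
  refine ⟨fun x => φ (E 0 0 (x 0 0)) + φ (E 0 1 (x 0 1)) + φ (E 1 0 (x 1 0)) + φ (E 1 1 (x 1 1)),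
    ?_, ?_, ?_, ?_, ?_⟩
  · intro x y
    simp only [Matrix.add_apply, haddΦ]
    abel
  · intro c x
    simp only [Matrix.smul_apply, hΦsmul]
    rw [smul_add, smul_add, smul_add]
  · intro x y
    have hxy : ∀ i k : Fin 2, (x * y) i k = x i 0 * y 0 k + x i 1 * y 1 k := by
      intro i k
      rw [Matrix.mul_apply, Fin.sum_univ_two]
    simp only [hxy, haddΦ, mul_add, add_mul, hΦmul, hne01, hne10, add_zero, zero_add]
    abel
  · intro x
    have hsx : ∀ i k : Fin 2, (star x) i k = star (x k i) := fun i k => Matrix.star_apply _ _ _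
    simp only [hsx, star_add, hstarΦ, star_star]
    abel
  · intro x hx
    have h := hsplit x hx
    rw [← hcorner 0 0 x hx, ← hcorner 0 1 x hx, ← hcorner 1 0 x hx, ← hcorner 1 1 x hx] at h
    exact h.symm

end Stmt6Main


/-- Let `A` and `B` be C*-algebras with `A` unital, and let
`φ` be an arbitrary function on the norm closure of the invertibles of
`M₂(A)` (modelled as a total function whose relevant values are those on the
closure).  Then `φ` extends to a `*`-homomorphism `M₂(A) → B` if and only if
`φ` is a `*`-semigroup homomorphism on the closure satisfying
`φ(i·1) = i·φ(e₁₁) + i·φ(e₂₂)`. -/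
theorem stmt_6 {A B : Type*} [CStarAlgebra A] [NonUnitalCStarAlgebra B]
    (φ : Matrix (Fin 2) (Fin 2) A → B) :
    (∃ ψ : Matrix (Fin 2) (Fin 2) A → B,
        (∀ x y, ψ (x + y) = ψ x + ψ y) ∧ (∀ (c : ℂ) (x), ψ (c • x) = c • ψ x) ∧
        (∀ x y, ψ (x * y) = ψ x * ψ y) ∧ (∀ x, ψ (star x) = star (ψ x)) ∧
        (∀ x ∈ closure {z : Matrix (Fin 2) (Fin 2) A | IsUnit z}, ψ x = φ x)) ↔
      ((∀ x y : Matrix (Fin 2) (Fin 2) A,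
          x ∈ closure {z : Matrix (Fin 2) (Fin 2) A | IsUnit z} →
          y ∈ closure {z : Matrix (Fin 2) (Fin 2) A | IsUnit z} →
          x * y ∈ closure {z : Matrix (Fin 2) (Fin 2) A | IsUnit z} →
          φ (x * y) = φ x * φ y) ∧
        (∀ x : Matrix (Fin 2) (Fin 2) A,
          x ∈ closure {z : Matrix (Fin 2) (Fin 2) A | IsUnit z} →
          star x ∈ closure {z : Matrix (Fin 2) (Fin 2) A | IsUnit z} →
          φ (star x) = star (φ x)) ∧
        φ (Complex.I • (1 : Matrix (Fin 2) (Fin 2) A)) =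
          Complex.I • φ (Matrix.single 0 0 (1 : A)) +
          Complex.I • φ (Matrix.single 1 1 (1 : A))) := by
  constructor
  · rintro ⟨ψ, hadd, hsmul, hmul, hstar, hagree⟩
    refine ⟨?_, ?_, ?_⟩
    · intro x y hx hy hxy
      rw [← hagree _ hxy, ← hagree _ hx, ← hagree _ hy, hmul]
    · intro x hx hsx
      rw [← hagree _ hsx, ← hagree _ hx, hstar]
    · have hxI : Complex.I • (1 : Matrix (Fin 2) (Fin 2) A) ∈
          closure {z : Matrix (Fin 2) (Fin 2) A | IsUnit z} :=
        subset_closure (Stmt6Aux2.isUnit_smul_one Complex.I_ne_zero)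
      have h00 := Stmt6Aux2.memE (A := A) 0 0 1
      have h11 := Stmt6Aux2.memE (A := A) 1 1 1
      rw [← hagree _ hxI, ← hagree _ h00, ← hagree _ h11]
      rw [hsmul, Stmt6Aux2.one_eq, hadd, smul_add]
  · rintro ⟨hm, hs, hI⟩
    exact Stmt6Main.backward φ hm hs hI
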